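/- Let G be a complete graph whose edges are each assigned a nonempty set of colors from {1,...,r} such that the coloring is transitive (if color i belongs to col(uv) and to col(vw), then i belongs to col(uw)). If every edge has at least t colors where r ≤ 2t and t < r, then the vertex set of G can be covered by at most r − t monochromatic components (a monochromatic component of color i is a connected component of the subgraph formed by edges whose color set contains i). -/

import Mathlib

/-- In a multi r-edge-colored complete graph (transitive coloring),
if every edge has at least t colors with r ≤ 2t and t < r, then V(G) can be
covered by at most r − t monochromatic components. -/
theorem stmt_0 {V : Type*} [Fintype V] [DecidableEq V] (r t : ℕ)
    (col : V → V → Finset (Fin r))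
    (hsymm : ∀ u v : V, col u v = col v u)
    (htrans : ∀ u v w : V, ∀ i : Fin r,
      i ∈ col u v → i ∈ col v w → u ≠ w → i ∈ col u w)
    (hcard : ∀ u v : V, u ≠ v → t ≤ (col u v).card)
    (hr2t : r ≤ 2 * t) (htr : t < r) :
    ∃ S : Finset (V × Fin r), S.card ≤ r - t ∧
      ∀ u : V, ∃ p ∈ S, u = p.1 ∨ p.2 ∈ col u p.1 := by
  have ht1 : 1 ≤ t := by omega
  have hs1 : 1 ≤ r - t := by omega
  rcases isEmpty_or_nonempty V with h | h
  · exact ⟨∅, by simp, fun u => (h.false u).elim⟩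
  obtain ⟨x⟩ := h
  -- Claim: there is a set C of r - t colors hitting col x w for all w ≠ x.
  have claim : ∃ C : Finset (Fin r), C.card = r - t ∧
      ∀ w, w ≠ x → ((col x w) ∩ C).Nonempty := by
    by_contra hc
    push_neg at hc
    obtain ⟨C1, _, hC1⟩ := Finset.exists_subset_card_eq (s := (Finset.univ : Finset (Fin r))) (n := r - t)
      (by simp only [Finset.card_univ, Fintype.card_fin]; omega)
    obtain ⟨C2, hC2sub, hC2⟩ := Finset.exists_subset_card_eq (s := C1ᶜ) (n := r - t)
      (by rw [Finset.card_compl, hC1, Fintype.card_fin]; omega)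
    have hdisj : Disjoint C1 C2 :=
      Finset.disjoint_left.mpr (fun i hi1 hi2 => Finset.mem_compl.mp (hC2sub hi2) hi1)
    obtain ⟨w1, hw1x, hw1⟩ := hc C1 hC1
    obtain ⟨w2, hw2x, hw2⟩ := hc C2 hC2
    have key : ∀ w (C : Finset (Fin r)), w ≠ x → C.card = r - t →
        ¬(col x w ∩ C).Nonempty → col x w = Cᶜ := by
      intro w C hwx hCcard hne
      have hsub : col x w ⊆ Cᶜ := by
        intro i hi
        rw [Finset.mem_compl]
        intro hiC
        exact hne ⟨i, Finset.mem_inter.mpr ⟨hi, hiC⟩⟩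
      refine Finset.eq_of_subset_of_card_le hsub ?_
      have h1 : Cᶜ.card = r - (r - t) := by rw [Finset.card_compl, hCcard, Fintype.card_fin]
      have h2 : t ≤ (col x w).card := hcard x w (Ne.symm hwx)
      omega
    have e1 : col x w1 = C1ᶜ := key w1 C1 hw1x hC1 (Finset.not_nonempty_iff_eq_empty.mpr hw1)
    have e2 : col x w2 = C2ᶜ := key w2 C2 hw2x hC2 (Finset.not_nonempty_iff_eq_empty.mpr hw2)
    have hw12 : w1 ≠ w2 := by
      intro hEq
      have : C1ᶜ = C2ᶜ := by rw [← e1, ← e2, hEq]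
      have hcc : C1 = C2 := compl_injective this
      have : C1 = ∅ := by have h := disjoint_self.mp (hcc ▸ hdisj); exact hcc.trans h
      rw [this] at hC1
      simp at hC1
      omega
    -- There is a color of edge w1 w2 inside C1 ∪ C2
    have hex : ∃ i, i ∈ col w1 w2 ∩ (C1 ∪ C2) := by
      by_contra hno
      push_neg at hno
      have hsub : col w1 w2 ⊆ (C1 ∪ C2)ᶜ := by
        intro i hi
        rw [Finset.mem_compl]
        intro hiU
        exact hno i (Finset.mem_inter.mpr ⟨hi, hiU⟩)
      have hcardU : (C1 ∪ C2).card = (r - t) + (r - t) := by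
        rw [Finset.card_union_of_disjoint hdisj, hC1, hC2]
      have h1 : ((C1 ∪ C2)ᶜ).card = r - ((r - t) + (r - t)) := by
        rw [Finset.card_compl, hcardU, Fintype.card_fin]
      have h2 : t ≤ (col w1 w2).card := hcard w1 w2 hw12
      have h3 : (col w1 w2).card ≤ ((C1 ∪ C2)ᶜ).card := Finset.card_le_card hsub
      omega
    obtain ⟨i, hi⟩ := hex
    rw [Finset.mem_inter, Finset.mem_union] at hi
    obtain ⟨hiw, hiC1 | hiC2⟩ := hi
    · -- i ∈ C1 : then i ∈ col x w2, and i ∈ col w2 w1, so i ∈ col x w1 = C1ᶜ, contra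
      have h2 : i ∈ col x w2 := by
        rw [e2, Finset.mem_compl]
        exact fun hiC2 => (Finset.disjoint_left.mp hdisj hiC1) hiC2
      have h3 : i ∈ col w2 w1 := by rw [hsymm]; exact hiw
      have h4 : i ∈ col x w1 := htrans x w2 w1 i h2 h3 (Ne.symm hw1x)
      rw [e1, Finset.mem_compl] at h4
      exact h4 hiC1
    · have h2 : i ∈ col x w1 := by
        rw [e1, Finset.mem_compl]
        exact fun hiC1 => (Finset.disjoint_left.mp hdisj hiC1) hiC2
      have h4 : i ∈ col x w2 := htrans x w1 w2 i h2 hiw (Ne.symm hw2x)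
      rw [e2, Finset.mem_compl] at h4
      exact h4 hiC2
  obtain ⟨C, hCcard, hC⟩ := claim
  refine ⟨C.image (fun i => (x, i)), ?_, ?_⟩
  · calc (C.image (fun i => (x, i))).card ≤ C.card := Finset.card_image_le
      _ = r - t := hCcard
  · intro u
    by_cases hux : u = x
    · obtain ⟨i, hiC⟩ : C.Nonempty := Finset.card_pos.mp (by omega)
      exact ⟨(x, i), Finset.mem_image_of_mem _ hiC, Or.inl hux⟩
    · obtain ⟨i, hi⟩ := hC u hux
      rw [Finset.mem_inter] at hi
      refine ⟨(x, i), Finset.mem_image_of_mem _ hi.2, Or.inr ?_⟩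
      rw [hsymm]
      exact hi.1
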